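/- Let f(x) = Σ_{k=0}^d a_k·x^k be a polynomial with a_k ≥ 0 for all k, and let s = (s_α)_{α∈ℕ₀^n} be a moment sequence represented by a finite measure μ with all moments finite. Then the sequence (f(s_α))_{α∈ℕ₀^n} is a moment sequence, represented by Σ_{k=0}^d a_k·μ^{⊙k}. -/

import Mathlib

open MeasureTheory

/-- Multiplicative convolution of measures on ℝ^n. -/
noncomputable def mconv {n : ℕ} (μ ν : Measure (Fin n → ℝ)) : Measure (Fin n → ℝ) :=
  (μ.prod ν).map (fun p => fun i => p.1 i * p.2 i)

/-- `k`-fold multiplicative convolution power, with `ν^{⊙0} = δ_𝟙`. -/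
noncomputable def mconvPow {n : ℕ} (ν : Measure (Fin n → ℝ)) : ℕ → Measure (Fin n → ℝ)
  | 0 => Measure.dirac (fun _ => (1 : ℝ))
  | k + 1 => mconv ν (mconvPow ν k)

lemma measurable_mulmap {n : ℕ} :
    Measurable (fun p : (Fin n → ℝ) × (Fin n → ℝ) => fun i => p.1 i * p.2 i) := by
  apply measurable_pi_lambda
  intro i
  exact ((measurable_pi_apply i).comp measurable_fst).mul
    ((measurable_pi_apply i).comp measurable_snd)

instance mconvPow_finite {n : ℕ} (μ : Measure (Fin n → ℝ)) [IsFiniteMeasure μ] (k : ℕ) :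
    IsFiniteMeasure (mconvPow μ k) := by
  induction k with
  | zero =>
    simp only [mconvPow]
    infer_instance
  | succ k ih =>
    constructor
    rw [mconvPow, mconv, Measure.map_apply measurable_mulmap MeasurableSet.univ,
      Set.preimage_univ, ← Set.univ_prod_univ, Measure.prod_prod]
    exact ENNReal.mul_lt_top (measure_lt_top _ _) (measure_lt_top _ _)

lemma key {n : ℕ} (μ : Measure (Fin n → ℝ)) [IsFiniteMeasure μ] (α : Fin n → ℕ)
    (hint : Integrable (fun x => ∏ i, x i ^ α i) μ) (k : ℕ) :
    Integrable (fun x => ∏ i, x i ^ α i) (mconvPow μ k) ∧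
      ∫ x, ∏ i, x i ^ α i ∂(mconvPow μ k) = (∫ x, ∏ i, x i ^ α i ∂μ) ^ k := by
  have hmeas : Measurable (fun x : Fin n → ℝ => ∏ i, x i ^ α i) := by
    exact Finset.measurable_prod _ (fun i _ => (measurable_pi_apply i).pow_const _)
  induction k with
  | zero =>
    constructor
    · refine ⟨hmeas.aestronglyMeasurable, ?_⟩
      simp only [HasFiniteIntegral, mconvPow]
      rw [lintegral_dirac' _ hmeas.enorm]
      exact enorm_lt_top
    · simp [mconvPow, integral_dirac]
  | succ k ih =>
    have hmap : ∀ p : (Fin n → ℝ) × (Fin n → ℝ),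
        (∏ i, (fun i => p.1 i * p.2 i) i ^ α i) =
          (∏ i, p.1 i ^ α i) * (∏ i, p.2 i ^ α i) := by
      intro p
      simp_rw [mul_pow]
      exact Finset.prod_mul_distrib
    have hInt2 : Integrable (fun p : (Fin n → ℝ) × (Fin n → ℝ) =>
        (∏ i, p.1 i ^ α i) * (∏ i, p.2 i ^ α i)) (μ.prod (mconvPow μ k)) :=
      Integrable.mul_prod hint ih.1
    constructor
    · rw [mconvPow, mconv]
      rw [integrable_map_measure hmeas.aestronglyMeasurable measurable_mulmap.aemeasurable]
      simpa only [Function.comp_def, hmap] using hInt2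
    · rw [mconvPow, mconv, integral_map measurable_mulmap.aemeasurable hmeas.aestronglyMeasurable]
      simp_rw [hmap]
      rw [pow_succ', ← ih.2]
      exact integral_prod_mul (fun x : Fin n → ℝ => ∏ i, x i ^ α i) (fun x : Fin n → ℝ => ∏ i, x i ^ α i)

theorem polynomial_map_moment_sequence {n : ℕ} (d : ℕ) (a : ℕ → ℝ)
    (ha : ∀ k, 0 ≤ a k) (μ : Measure (Fin n → ℝ)) [IsFiniteMeasure μ]
    (s : (Fin n → ℕ) → ℝ)
    (hint : ∀ α : Fin n → ℕ, Integrable (fun x => ∏ i, x i ^ α i) μ)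
    (hs : ∀ α : Fin n → ℕ, s α = ∫ x, ∏ i, x i ^ α i ∂μ) :
    ∀ α : Fin n → ℕ,
      ∫ x, ∏ i, x i ^ α i
          ∂(∑ k ∈ Finset.range (d + 1), ENNReal.ofReal (a k) • mconvPow μ k) =
        ∑ k ∈ Finset.range (d + 1), a k * (s α) ^ k := by
  intro α
  rw [integral_finset_sum_measure (fun k _ => ((key μ α (hint α) k).1).smul_measure (by simp))]
  refine Finset.sum_congr rfl fun k _ => ?_
  rw [integral_smul_measure, ENNReal.toReal_ofReal (ha k), (key μ α (hint α) k).2, hs α,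
    smul_eq_mul]
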